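/- The coin-averaged transition probabilities of the Hadamard walk are symmetric: for every n ∈ ℕ and all k, j ∈ ℤ, pₙ(k, j) = pₙ(j, k), where pₙ(k, j) := ½‖(Uⁿ(δ_k ⊗ +))(j)‖² + ½‖(Uⁿ(δ_k ⊗ −))(j)‖². Equivalently, pₙ(0, m) = pₙ(0, −m) for all m ∈ ℤ. -/
import Mathlib


open scoped ENNReal

noncomputable section

/-- The state space `ℓ²(ℤ; ℂ²)` of the Hadamard quantum walk. -/
abbrev QWState : Type := lp (fun _ : ℤ => EuclideanSpace ℂ (Fin 2)) 2

/-- The walk started at site `k` with pure coin state `c`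
(`c = 0` is the coin `+`, `c = 1` is the coin `−`): the unit vector `δ_k ⊗ c`. -/
def deltaCoin (k : ℤ) (c : Fin 2) : QWState := lp.single 2 k (EuclideanSpace.single c 1)

lemma deltaCoin_apply (k : ℤ) (c : Fin 2) (j : ℤ) :
    (deltaCoin k c : ∀ _ : ℤ, EuclideanSpace ℂ (Fin 2)) j
      = if j = k then EuclideanSpace.single c 1 else 0 := by
  rcases eq_or_ne j k with rfl | h
  · simp [deltaCoin, lp.single_apply_self]
  · simp [deltaCoin, lp.single_apply_ne 2 k _ h, h]

lemma euclid_norm_sq (v : EuclideanSpace ℂ (Fin 2)) : ‖v‖ ^ 2 = ‖v 0‖ ^ 2 + ‖v 1‖ ^ 2 := by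
  rw [EuclideanSpace.norm_eq, Real.sq_sqrt (by positivity)]
  simp [Fin.sum_univ_two]

section aux

variable (U : QWState →ₗ[ℂ] QWState)
    (hU : ∀ (ψ : QWState) (k : ℤ),
      (U ψ) k 0 = (ψ (k - 1) 0 + ψ (k - 1) 1) / (Real.sqrt 2 : ℂ) ∧
      (U ψ) k 1 = (ψ (k + 1) 0 - ψ (k + 1) 1) / (Real.sqrt 2 : ℂ))

include hU

lemma walk_translate (c : Fin 2) (k : ℤ) : ∀ (n : ℕ) (j : ℤ),
    ((U ^ n) (deltaCoin k c)) j 0 = ((U ^ n) (deltaCoin 0 c)) (j - k) 0 ∧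
    ((U ^ n) (deltaCoin k c)) j 1 = ((U ^ n) (deltaCoin 0 c)) (j - k) 1 := by
  intro n
  induction n with
  | zero =>
      intro j
      simp only [pow_zero, Module.End.one_apply, deltaCoin_apply, sub_eq_zero]
      rcases eq_or_ne j k with rfl | h
      · simp
      · simp [h]
  | succ n ih =>
      intro j
      rw [pow_succ', Module.End.mul_apply, Module.End.mul_apply]
      obtain ⟨h1, h2⟩ := hU ((U ^ n) (deltaCoin k c)) j
      obtain ⟨h1', h2'⟩ := hU ((U ^ n) (deltaCoin 0 c)) (j - k)
      constructor
      · rw [h1, h1', (ih (j - 1)).1, (ih (j - 1)).2, show j - 1 - k = j - k - 1 by ring]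
      · rw [h2, h2', (ih (j + 1)).1, (ih (j + 1)).2, show j + 1 - k = j - k + 1 by ring]

lemma walk_reflect : ∀ (n : ℕ) (j : ℤ),
    ((U ^ n) (deltaCoin 0 0)) j 0 = (-1 : ℂ) ^ n * ((U ^ n) (deltaCoin 0 1)) (-j) 1 ∧
    ((U ^ n) (deltaCoin 0 0)) j 1 = -((-1 : ℂ) ^ n) * ((U ^ n) (deltaCoin 0 1)) (-j) 0 := by
  intro n
  induction n with
  | zero =>
      intro j
      simp only [pow_zero, Module.End.one_apply, deltaCoin_apply, one_mul, neg_eq_zero]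
      rcases eq_or_ne j 0 with rfl | h
      · simp
      · simp [h]
  | succ n ih =>
      intro j
      rw [pow_succ', Module.End.mul_apply, Module.End.mul_apply]
      obtain ⟨h1, h2⟩ := hU ((U ^ n) (deltaCoin 0 0)) j
      obtain ⟨h1', h2'⟩ := hU ((U ^ n) (deltaCoin 0 1)) (-j)
      constructor
      · rw [h1, h2', (ih (j - 1)).1, (ih (j - 1)).2,
          show -(j - 1) = -j + 1 by ring, pow_succ]
        ring
      · rw [h2, h1', (ih (j + 1)).1, (ih (j + 1)).2,
          show -(j + 1) = -j - 1 by ring, pow_succ]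
        ring

lemma walk_reflect_norm (n : ℕ) (j : ℤ) :
    ‖((U ^ n) (deltaCoin 0 0)) j‖ ^ 2 = ‖((U ^ n) (deltaCoin 0 1)) (-j)‖ ^ 2 := by
  obtain ⟨h1, h2⟩ := walk_reflect U hU n j
  rw [euclid_norm_sq, euclid_norm_sq, h1, h2]
  have hn : ‖(-1 : ℂ) ^ n‖ = 1 := by simp
  simp only [norm_mul, norm_neg, hn, one_mul]
  ring

end aux

/-- **Symmetry of the coin-averaged Hadamard walk transition probabilities.**
Let `U` be the Hadamard quantum walk operator on `ℓ²(ℤ; ℂ²)`, defined coordinatewise by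
`(Uψ)₊(k) = (ψ₊(k−1) + ψ₋(k−1))/√2` and `(Uψ)₋(k) = (ψ₊(k+1) − ψ₋(k+1))/√2`.
With `pₙ(k, j) := ½‖(Uⁿ(δ_k ⊗ +))(j)‖² + ½‖(Uⁿ(δ_k ⊗ −))(j)‖²`, for every `n ∈ ℕ`
and all `k, j ∈ ℤ` one has `pₙ(k, j) = pₙ(j, k)`; equivalently `pₙ(0, m) = pₙ(0, −m)`
for all `m ∈ ℤ`. -/
theorem hadamard_walk_symmetric
    (U : QWState →ₗ[ℂ] QWState)
    (hU : ∀ (ψ : QWState) (k : ℤ),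
      (U ψ) k 0 = (ψ (k - 1) 0 + ψ (k - 1) 1) / (Real.sqrt 2 : ℂ) ∧
      (U ψ) k 1 = (ψ (k + 1) 0 - ψ (k + 1) 1) / (Real.sqrt 2 : ℂ))
    (p : ℕ → ℤ → ℤ → ℝ)
    (hp : ∀ (n : ℕ) (k j : ℤ), p n k j =
      (1 / 2) * ‖((U ^ n) (deltaCoin k 0)) j‖ ^ 2
        + (1 / 2) * ‖((U ^ n) (deltaCoin k 1)) j‖ ^ 2) :
    (∀ (n : ℕ) (k j : ℤ), p n k j = p n j k) ∧
    (∀ (n : ℕ) (m : ℤ), p n 0 m = p n 0 (-m)) := by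
  -- translation: p n k j depends only on j - k
  have hnorm : ∀ (c : Fin 2) (n : ℕ) (k j : ℤ),
      ‖((U ^ n) (deltaCoin k c)) j‖ ^ 2 = ‖((U ^ n) (deltaCoin 0 c)) (j - k)‖ ^ 2 := by
    intro c n k j
    obtain ⟨h1, h2⟩ := walk_translate U hU c k n j
    rw [euclid_norm_sq, euclid_norm_sq, h1, h2]
  have htrans : ∀ (n : ℕ) (k j : ℤ), p n k j = p n 0 (j - k) := by
    intro n k j
    rw [hp, hp, hnorm 0 n k j, hnorm 1 n k j]
  have hrefl : ∀ (n : ℕ) (d : ℤ), p n 0 d = p n 0 (-d) := by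
    intro n d
    rw [hp, hp]
    have h1 := walk_reflect_norm U hU n d
    have h2 := walk_reflect_norm U hU n (-d)
    rw [neg_neg] at h2
    rw [h1, ← h2]
    ring
  refine ⟨fun n k j => ?_, fun n m => hrefl n m⟩
  rw [htrans n k j, htrans n j k, hrefl n (j - k), neg_sub]

end
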